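/- Let M ∈ ℕ, δ > 0, C₁, C₂ ≥ 0, λ₀ ∈ ℝ, and let f : ℝ → (Fin M → ℝ) → ℝ be such that for every z ∈ [-1,1]^M, the map t ↦ f t z is twice differentiable on (-δ, δ) with |∂ₜ f t z| ≤ C₁ and |∂ₜ² f t z| ≤ C₂ there, f 0 z = λ₀, and ∂ₜ f 0 z = L z for a fixed linear functional L : (Fin M → ℝ) →ₗ[ℝ] ℝ. Let Z be a random vector valued almost surely in [-1,1]^M with 𝔼[Z] = 0, with ω ↦ f t (Z ω) measurable for each t. Then there exists a constant C' ≥ 0, depending only on C₁, C₂ and the operator norm of L, such that for all |t| < δ: |Var[f t Z] − t² * Var[L Z]| ≤ C' * |t|³, where Var[Y] = 𝔼[Y²] − (𝔼[Y])². -/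

import Mathlib

open MeasureTheory

/-- Mean value inequality on `uIcc 0 t`. -/
lemma mvt_abs_aux (g g' : ℝ → ℝ) (t C : ℝ)
    (hg : ∀ x ∈ Set.uIcc (0:ℝ) t, HasDerivAt g (g' x) x)
    (hC : ∀ x ∈ Set.uIcc (0:ℝ) t, |g' x| ≤ C) :
    ∀ x ∈ Set.uIcc (0:ℝ) t, |g x - g 0| ≤ C * |x| := by
  intro x hx
  have := Convex.norm_image_sub_le_of_norm_hasDerivWithin_le
    (f := g) (f' := g') (s := Set.uIcc (0:ℝ) t) (C := C)
    (fun y hy => (hg y hy).hasDerivWithinAt) (fun y hy => hC y hy)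
    (convex_uIcc _ _) Set.left_mem_uIcc hx
  simpa using this

theorem variance_perturbation_third_order
    {Ω : Type*} [MeasurableSpace Ω] (P : Measure Ω) [IsProbabilityMeasure P]
    (M : ℕ) (δ C₁ C₂ : ℝ) (hδ : 0 < δ) (hC₁ : 0 ≤ C₁) (hC₂ : 0 ≤ C₂)
    (lam0 : ℝ)
    (f f' f'' : ℝ → (Fin M → ℝ) → ℝ)
    (L : (Fin M → ℝ) →ₗ[ℝ] ℝ)
    (hf : ∀ z : Fin M → ℝ, (∀ i, z i ∈ Set.Icc (-1 : ℝ) 1) →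
      ∀ t ∈ Set.Ioo (-δ) δ,
        HasDerivAt (fun s => f s z) (f' t z) t ∧
        HasDerivAt (fun s => f' s z) (f'' t z) t ∧
        |f' t z| ≤ C₁ ∧ |f'' t z| ≤ C₂)
    (hf0 : ∀ z : Fin M → ℝ, (∀ i, z i ∈ Set.Icc (-1 : ℝ) 1) → f 0 z = lam0)
    (hf'0 : ∀ z : Fin M → ℝ, (∀ i, z i ∈ Set.Icc (-1 : ℝ) 1) → f' 0 z = L z)
    (Z : Ω → Fin M → ℝ) (hZmeas : Measurable Z)
    (hZbox : ∀ᵐ ω ∂P, ∀ i, Z ω i ∈ Set.Icc (-1 : ℝ) 1)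
    (hZmean : ∫ ω, Z ω ∂P = 0)
    (hmeas : ∀ t : ℝ, Measurable fun ω => f t (Z ω)) :
    ∃ C' : ℝ, 0 ≤ C' ∧ ∀ t : ℝ, |t| < δ →
      |((∫ ω, (f t (Z ω)) ^ 2 ∂P) - (∫ ω, f t (Z ω) ∂P) ^ 2)
          - t ^ 2 * ((∫ ω, (L (Z ω)) ^ 2 ∂P) - (∫ ω, L (Z ω) ∂P) ^ 2)|
        ≤ C' * |t| ^ 3 := by
  have hLcont : Continuous fun z : Fin M → ℝ => L z :=
    (LinearMap.toContinuousLinearMap L).continuous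
  have hLmeas : Measurable fun ω => L (Z ω) := hLcont.measurable.comp hZmeas
  -- |L z| ≤ C₁ on the box
  have hLbound : ∀ z : Fin M → ℝ, (∀ i, z i ∈ Set.Icc (-1:ℝ) 1) → |L z| ≤ C₁ := by
    intro z hz
    have h0 : (0:ℝ) ∈ Set.Ioo (-δ) δ := by constructor <;> linarith
    have := (hf z hz 0 h0).2.2.1
    rwa [hf'0 z hz] at this
  -- Z is integrable, hence ∫ L(Z) = 0
  have hZint : Integrable Z P := by
    refine (integrable_const (1:ℝ)).mono' hZmeas.aestronglyMeasurable ?_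
    filter_upwards [hZbox] with ω hω
    rw [pi_norm_le_iff_of_nonneg zero_le_one]
    intro i; rw [Real.norm_eq_abs, abs_le]; exact ⟨(hω i).1, (hω i).2⟩
  have hLZ0 : ∫ ω, L (Z ω) ∂P = 0 := by
    have h := (LinearMap.toContinuousLinearMap L).integral_comp_comm hZint
    simp only [LinearMap.coe_toContinuousLinearMap'] at h
    rw [h, hZmean, map_zero]
  refine ⟨2*C₁*C₂ + C₂^2*δ, by positivity, ?_⟩
  intro t ht
  obtain ⟨ht1, ht2⟩ := abs_lt.1 ht
  have hsub : ∀ x ∈ Set.uIcc (0:ℝ) t, x ∈ Set.Ioo (-δ) δ := by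
    intro x hx
    rcases Set.mem_uIcc.1 hx with ⟨h1, h2⟩ | ⟨h1, h2⟩ <;> constructor <;> linarith
  have habsle : ∀ x ∈ Set.uIcc (0:ℝ) t, |x| ≤ |t| := by
    intro x hx
    rcases Set.mem_uIcc.1 hx with ⟨h1, h2⟩ | ⟨h1, h2⟩
    · exact abs_le_abs h2 (by linarith)
    · rw [abs_of_nonpos h2, abs_of_nonpos (le_trans h1 h2)]; linarith
  -- pointwise bounds for z in the box
  have key : ∀ z : Fin M → ℝ, (∀ i, z i ∈ Set.Icc (-1:ℝ) 1) →
      |f t z - lam0| ≤ C₁ * |t| ∧ |f t z - lam0 - t * L z| ≤ C₂ * t^2 := by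
    intro z hz
    have h0t : t ∈ Set.uIcc (0:ℝ) t := Set.right_mem_uIcc
    have h1 : |f t z - lam0| ≤ C₁ * |t| := by
      have := mvt_abs_aux (fun s => f s z) (fun s => f' s z) t C₁
        (fun x hx => (hf z hz x (hsub x hx)).1)
        (fun x hx => (hf z hz x (hsub x hx)).2.2.1) t h0t
      simpa only [hf0 z hz] using this
    refine ⟨h1, ?_⟩
    -- bound on f' x z - L z
    have hd : ∀ x ∈ Set.uIcc (0:ℝ) t, |f' x z - L z| ≤ C₂ * |t| := by
      intro x hx
      have := mvt_abs_aux (fun s => f' s z) (fun s => f'' s z) t C₂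
        (fun y hy => (hf z hz y (hsub y hy)).2.1)
        (fun y hy => (hf z hz y (hsub y hy)).2.2.2) x hx
      simp only [hf'0 z hz] at this
      calc |f' x z - L z| ≤ C₂ * |x| := this
        _ ≤ C₂ * |t| := by
            exact mul_le_mul_of_nonneg_left (habsle x hx) hC₂
    have h2 := mvt_abs_aux (fun s => f s z - s * L z) (fun s => f' s z - L z) t
      (C₂ * |t|)
      (fun x hx => by
        have hx1 := (hf z hz x (hsub x hx)).1
        have : HasDerivAt (fun s => f s z - s * L z) (f' x z - 1 * L z) x :=
          hx1.sub ((hasDerivAt_id x).mul_const (L z))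
        simpa using this)
      hd t h0t
    simp only [zero_mul, sub_zero] at h2
    rw [hf0 z hz] at h2
    calc |f t z - lam0 - t * L z| = |f t z - t * L z - lam0| := by ring_nf
      _ ≤ C₂ * |t| * |t| := h2
      _ = C₂ * t^2 := by rw [mul_assoc, abs_mul_abs_self]; ring
  -- abbreviations
  set X : Ω → ℝ := fun ω => f t (Z ω) with hX
  set V : Ω → ℝ := fun ω => L (Z ω) with hV
  have hXm : Measurable X := hmeas t
  have hVm : Measurable V := hLmeas
  -- a.e. facts
  have hae : ∀ᵐ ω ∂P, |X ω - lam0| ≤ C₁*|t| ∧ |X ω - lam0 - t * V ω| ≤ C₂*t^2 ∧ |V ω| ≤ C₁ := by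
    filter_upwards [hZbox] with ω hω
    exact ⟨(key _ hω).1, (key _ hω).2, hLbound _ hω⟩
  -- integrabilities
  have iV : Integrable V P :=
    (integrable_const C₁).mono' hVm.aestronglyMeasurable
      (by filter_upwards [hae] with ω h; simpa using h.2.2)
  have iV2 : Integrable (fun ω => V ω ^ 2) P :=
    (integrable_const (C₁^2)).mono' (hVm.pow_const 2).aestronglyMeasurable
      (by
        filter_upwards [hae] with ω h
        rw [Real.norm_eq_abs, abs_pow]
        exact pow_le_pow_left₀ (abs_nonneg _) h.2.2 2)
  have iu : Integrable (fun ω => X ω - lam0) P :=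
    (integrable_const (C₁*|t|)).mono' (hXm.sub measurable_const).aestronglyMeasurable
      (by filter_upwards [hae] with ω h; simpa using h.1)
  have iu2 : Integrable (fun ω => (X ω - lam0) ^ 2) P :=
    (integrable_const ((C₁*|t|)^2)).mono'
      ((hXm.sub measurable_const).pow_const 2).aestronglyMeasurable
      (by
        filter_upwards [hae] with ω h
        rw [Real.norm_eq_abs, abs_pow]
        exact pow_le_pow_left₀ (abs_nonneg _) h.1 2)
  have iuv : Integrable (fun ω => X ω - lam0 - t * V ω) P := iu.sub (iV.const_mul t)
  have itv2 : Integrable (fun ω => (t * V ω) ^ 2) P := by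
    have : (fun ω => (t * V ω) ^ 2) = fun ω => t^2 * V ω ^ 2 := by funext ω; ring
    rw [this]; exact iV2.const_mul _
  have iu2tv2 : Integrable (fun ω => (X ω - lam0)^2 - (t * V ω)^2) P := iu2.sub itv2
  -- expectations of X, X² in terms of centered quantities
  set Iu := ∫ ω, (X ω - lam0) ∂P with hIudef
  set Iu2 := ∫ ω, (X ω - lam0)^2 ∂P with hIu2def
  have hB : ∫ ω, X ω ∂P = Iu + lam0 := by
    have : (fun ω => X ω) = fun ω => (X ω - lam0) + lam0 := by funext ω; ring
    rw [this, integral_add iu (integrable_const _), integral_const]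
    simp; rfl
  have hA : ∫ ω, X ω ^ 2 ∂P = Iu2 + 2*lam0*Iu + lam0^2 := by
    have : (fun ω => X ω ^ 2)
        = fun ω => ((X ω - lam0)^2 + (2*lam0)*(X ω - lam0)) + lam0^2 := by funext ω; ring
    have i12 : Integrable (fun ω => (X ω - lam0)^2 + (2*lam0)*(X ω - lam0)) P :=
      iu2.add (iu.const_mul _)
    rw [this, integral_add i12 (integrable_const _),
      integral_add iu2 (iu.const_mul _), integral_const_mul, integral_const]
    simp; rfl
  -- |Iu| ≤ C₂ t²
  have hIu : |Iu| ≤ C₂ * t^2 := by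
    have h1 : ∫ ω, (X ω - lam0 - t * V ω) ∂P = Iu := by
      rw [integral_sub iu (iV.const_mul t), integral_const_mul, hLZ0]
      simp; rfl
    calc |Iu| = |∫ ω, (X ω - lam0 - t * V ω) ∂P| := by rw [h1]
      _ ≤ ∫ ω, |X ω - lam0 - t * V ω| ∂P := by
          simpa [Real.norm_eq_abs] using
            norm_integral_le_integral_norm (fun ω => X ω - lam0 - t * V ω) (μ := P)
      _ ≤ ∫ ω, (C₂ * t^2) ∂P := by
          refine integral_mono_ae iuv.abs (integrable_const _) ?_
          filter_upwards [hae] with ω h using h.2.1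
      _ = C₂ * t^2 := by simp
  -- the quadratic difference
  have hD : |∫ ω, ((X ω - lam0)^2 - (t * V ω)^2) ∂P| ≤ 2*C₁*C₂*|t| ^ 3 := by
    calc |∫ ω, ((X ω - lam0)^2 - (t * V ω)^2) ∂P|
        ≤ ∫ ω, |(X ω - lam0)^2 - (t * V ω)^2| ∂P := by
          simpa [Real.norm_eq_abs] using
            norm_integral_le_integral_norm (fun ω => (X ω - lam0)^2 - (t * V ω)^2) (μ := P)
      _ ≤ ∫ ω, (2*C₁*C₂*|t| ^ 3) ∂P := by
          refine integral_mono_ae iu2tv2.abs (integrable_const _) ?_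
          filter_upwards [hae] with ω h
          obtain ⟨h1, h2, h3⟩ := h
          have e1 : (X ω - lam0)^2 - (t * V ω)^2
              = (X ω - lam0 - t * V ω) * (X ω - lam0 + t * V ω) := by ring
          rw [e1, abs_mul]
          have hsum : |X ω - lam0 + t * V ω| ≤ C₁*|t| + |t| * C₁ := by
            calc |X ω - lam0 + t * V ω| ≤ |X ω - lam0| + |t * V ω| := abs_add_le _ _
              _ ≤ C₁*|t| + |t| * C₁ := by
                  rw [abs_mul]
                  exact add_le_add h1 (mul_le_mul_of_nonneg_left h3 (abs_nonneg t))
          calc |X ω - lam0 - t * V ω| * |X ω - lam0 + t * V ω|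
              ≤ (C₂ * t^2) * (C₁*|t| + |t| * C₁) :=
                mul_le_mul h2 hsum (abs_nonneg _) (by positivity)
            _ = 2*C₁*C₂*|t| ^ 3 := by rw [← sq_abs t]; ring
      _ = 2*C₁*C₂*|t| ^ 3 := by simp
  have hDeq : ∫ ω, ((X ω - lam0)^2 - (t * V ω)^2) ∂P
      = Iu2 - t^2 * ∫ ω, V ω ^ 2 ∂P := by
    rw [integral_sub iu2 itv2]
    congr 1
    have : (fun ω => (t * V ω) ^ 2) = fun ω => t^2 * V ω ^ 2 := by funext ω; ring
    rw [this, integral_const_mul]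
  -- assemble
  rw [hLZ0, hA, hB]
  have e2 : Iu2 + 2*lam0*Iu + lam0^2 - (Iu + lam0)^2
      - t^2 * ((∫ ω, V ω ^ 2 ∂P) - 0^2)
      = (Iu2 - t^2 * ∫ ω, V ω ^ 2 ∂P) - Iu^2 := by ring
  rw [e2, ← hDeq]
  have hIu2' : Iu^2 ≤ C₂^2 * δ * |t| ^ 3 := by
    have h1 : |Iu| ^ 2 ≤ (C₂ * t^2)^2 := pow_le_pow_left₀ (abs_nonneg _) hIu 2
    rw [sq_abs] at h1
    have e : (C₂ * t^2)^2 = C₂^2 * (|t| ^ 3 * |t|) := by rw [← sq_abs t]; ring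
    have h2 : C₂^2 * (|t| ^ 3 * |t|) ≤ C₂^2 * (|t| ^ 3 * δ) := by
      have h3 := mul_le_mul_of_nonneg_left ht.le (pow_nonneg (abs_nonneg t) 3)
      exact mul_le_mul_of_nonneg_left h3 (sq_nonneg C₂)
    calc Iu^2 ≤ C₂^2 * (|t| ^ 3 * |t|) := e ▸ h1
      _ ≤ C₂^2 * (|t| ^ 3 * δ) := h2
      _ = C₂^2 * δ * |t| ^ 3 := by ring
  calc |(∫ ω, ((X ω - lam0)^2 - (t * V ω)^2) ∂P) - Iu^2|
      ≤ |∫ ω, ((X ω - lam0)^2 - (t * V ω)^2) ∂P| + |Iu^2| := by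
        rw [sub_eq_add_neg]; exact (abs_add_le _ _).trans (by rw [abs_neg])
    _ ≤ 2*C₁*C₂*|t| ^ 3 + C₂^2 * δ * |t| ^ 3 := by
        rw [abs_of_nonneg (sq_nonneg Iu)]
        exact add_le_add hD hIu2'
    _ = (2*C₁*C₂ + C₂^2*δ) * |t| ^ 3 := by ring
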